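/- Let α, β ∈ P^+_N satisfy αα̃ + ββ̃ = 1 on ℂ\{0}, |α(0)| + |β(0)| > 0, α(1) = 1 and β(1) = 0. Let φ = Π(α,β) be the unique element of P^-_N from Theorem 2 and (α',β') = ∐(φ) the unique normalized pair from Theorem 1. Then (α',β') = (α,β); i.e., ∐ ∘ Π is the identity on the set of normalized pairs. -/

import Mathlib

open Complex Finset Matrix

/-- Evaluation of the polynomial `∑_{k=0}^N a_k z^k` (element of `P⁺_N`). -/
noncomputable def pEval {N : ℕ} (a : Fin (N + 1) → ℂ) (z : ℂ) : ℂ :=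
  ∑ k : Fin (N + 1), a k * z ^ (k : ℕ)

/-- Evaluation of `p̃(z) = ∑_{k=0}^N conj(a_k) z^{-k}`. -/
noncomputable def pTilde {N : ℕ} (a : Fin (N + 1) → ℂ) (z : ℂ) : ℂ :=
  ∑ k : Fin (N + 1), (starRingEnd ℂ) (a k) * z⁻¹ ^ (k : ℕ)

/-- Evaluation of `φ(z) = ∑_{k=1}^N γ_k z^{-k}` (element of `P⁻_N`). -/
noncomputable def nEval {N : ℕ} (g : Fin N → ℂ) (z : ℂ) : ℂ :=
  ∑ k : Fin N, g k * z⁻¹ ^ ((k : ℕ) + 1)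

/-- A function on `ℂ \ {0}` that coincides with a polynomial in nonnegative powers of `z`. -/
def IsPolyFun (f : ℂ → ℂ) : Prop :=
  ∃ p : Polynomial ℂ, ∀ z : ℂ, z ≠ 0 → f z = p.eval z

noncomputable def polyOf {N : ℕ} (a : Fin (N + 1) → ℂ) : Polynomial ℂ :=
  ∑ k : Fin (N + 1), Polynomial.C (a k) * Polynomial.X ^ (k : ℕ)

lemma polyOf_eval {N : ℕ} (a : Fin (N + 1) → ℂ) (z : ℂ) :
    (polyOf a).eval z = pEval a z := by
  simp [polyOf, pEval, Polynomial.eval_finset_sum]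

lemma polyOf_coeff {N : ℕ} (a : Fin (N + 1) → ℂ) (k : Fin (N + 1)) :
    (polyOf a).coeff (k : ℕ) = a k := by
  simp only [polyOf, Polynomial.finset_sum_coeff, Polynomial.coeff_C_mul,
    Polynomial.coeff_X_pow]
  rw [Finset.sum_eq_single k]
  · simp
  · intro i _ hik
    have : (k : ℕ) ≠ (i : ℕ) := fun h => hik (Fin.ext h.symm)
    simp [this]
  · simp

lemma conj_pEval {N : ℕ} (a : Fin (N + 1) → ℂ) (z : ℂ) :
    (starRingEnd ℂ) (pEval a ((starRingEnd ℂ z)⁻¹)) = pTilde a z := by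
  simp [pEval, pTilde, map_sum, _root_.map_mul, map_pow, map_inv₀]

lemma conj_pTilde {N : ℕ} (a : Fin (N + 1) → ℂ) (z : ℂ) :
    (starRingEnd ℂ) (pTilde a ((starRingEnd ℂ z)⁻¹)) = pEval a z := by
  simp [pEval, pTilde, map_sum, _root_.map_mul, map_pow, map_inv₀, inv_inv]

lemma pTilde_one {N : ℕ} (a : Fin (N + 1) → ℂ) :
    pTilde a 1 = (starRingEnd ℂ) (pEval a 1) := by
  simp [pEval, pTilde, map_sum]

lemma conj_poly_eval (P : Polynomial ℂ) (x : ℂ) :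
    (P.map (starRingEnd ℂ)).eval ((starRingEnd ℂ) x) = (starRingEnd ℂ) (P.eval x) := by
  rw [Polynomial.eval_map, Polynomial.eval₂_at_apply]

lemma aux_const (P : Polynomial ℂ)
    (h : ∀ z : ℂ, z ≠ 0 → P.eval z = (P.map (starRingEnd ℂ)).eval z⁻¹) :
    P.natDegree = 0 := by
  by_contra hn
  have hP0 : P ≠ 0 := fun h0 => hn (by simp [h0])
  set n := P.natDegree with hn'
  have h1n : 1 ≤ n := Nat.one_le_iff_ne_zero.mpr hn
  set T : Polynomial ℂ :=
    ∑ k ∈ Finset.range (n + 1), Polynomial.C ((starRingEnd ℂ) (P.coeff k)) * Polynomial.X ^ (n - k) with hT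
  have hmapdeg : (P.map (starRingEnd ℂ)).natDegree < n + 1 :=
    lt_of_le_of_lt (Polynomial.natDegree_map_le) (Nat.lt_succ_self n)
  have key : Polynomial.X ^ n * P = T := by
    apply Polynomial.eq_of_infinite_eval_eq
    apply Set.Infinite.mono (s := {(0:ℂ)}ᶜ)
    · intro z hz
      have hz : z ≠ 0 := hz
      have : (Polynomial.X ^ n * P).eval z = T.eval z := by
        rw [Polynomial.eval_mul, Polynomial.eval_pow, Polynomial.eval_X, h z hz,
          Polynomial.eval_eq_sum_range' hmapdeg, Finset.mul_sum, hT,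
          Polynomial.eval_finset_sum]
        apply Finset.sum_congr rfl
        intro k hk
        have hk' : k ≤ n := Nat.lt_succ_iff.mp (Finset.mem_range.mp hk)
        rw [Polynomial.eval_mul, Polynomial.eval_pow, Polynomial.eval_X,
          Polynomial.eval_C, Polynomial.coeff_map, inv_pow, pow_sub₀ z hz hk']
        ring
      exact this
    · exact Set.Finite.infinite_compl (Set.finite_singleton 0)
  have hdeg : (Polynomial.X ^ n * P).natDegree = n + n := by
    rw [Polynomial.natDegree_mul (pow_ne_zero _ Polynomial.X_ne_zero) hP0,
      Polynomial.natDegree_X_pow]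
  have hTdeg : T.natDegree ≤ n := by
    apply Polynomial.natDegree_sum_le_of_forall_le
    intro k _
    exact le_trans (Polynomial.natDegree_C_mul_X_pow_le _ _) (Nat.sub_le n k)
  rw [key] at hdeg
  omega

lemma circle_infinite : Set.Infinite {z : ℂ | ‖z‖ = 1} := by
  apply Set.infinite_of_injective_forall_mem
    (f := fun t : ℝ => Complex.mk ((1 - t^2)/(1+t^2)) (2*t/(1+t^2)))
  case hi =>
    intro s t h
    have h1 : (0:ℝ) < 1 + s^2 := by positivity
    have h2 : (0:ℝ) < 1 + t^2 := by positivity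
    have hre : (1 - s^2)/(1+s^2) = (1 - t^2)/(1+t^2) := congrArg Complex.re h
    have him : 2*s/(1+s^2) = 2*t/(1+t^2) := congrArg Complex.im h
    have hre' : (1 - s^2) * (1+t^2) = (1 - t^2) * (1+s^2) := by
      field_simp at hre; linarith
    have hsq : s^2 = t^2 := by nlinarith
    have him' : 2*s*(1+t^2) = 2*t*(1+s^2) := by field_simp at him; linarith
    have hst : (s - t) * (1 + t^2) = 0 := by linear_combination him'/2 + t*hsq
    rcases mul_eq_zero.mp hst with h' | h'
    · linarith [sub_eq_zero.mp h']
    · linarith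
  case hf =>
    intro t
    have h2 : (0:ℝ) < 1 + t^2 := by positivity
    show ‖_‖ = 1
    rw [Complex.norm_def, Complex.normSq_mk]
    rw [show (1 - t^2)/(1+t^2) * ((1 - t^2)/(1+t^2)) + 2*t/(1+t^2) * (2*t/(1+t^2)) = 1 by
      field_simp; ring]
    exact Real.sqrt_one

/-- Corollary 4: `∐ ∘ Π` is the identity on normalized pairs: if `(α,β)` is normalized
(`α(1)=1`, `β(1)=0`), `φ = Π(α,β)`, and `(α',β') = ∐(φ)` is the normalized pair for `φ`,
then `(α',β') = (α,β)`. -/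
theorem daubechies_corollary4 (N : ℕ) (hN : 1 ≤ N)
    (a b : Fin (N + 1) → ℂ)
    (hunit : ∀ z : ℂ, z ≠ 0 →
      pEval a z * pTilde a z + pEval b z * pTilde b z = 1)
    (h0 : 0 < ‖pEval a 0‖ + ‖pEval b 0‖)
    (ha1 : pEval a 1 = 1) (hb1 : pEval b 1 = 0)
    (g : Fin N → ℂ)
    (hpoly : ∀ i j : Fin 2, IsPolyFun (fun z =>
      ((!![(1 : ℂ), 0; nEval g z, 1] : Matrix (Fin 2) (Fin 2) ℂ) *
        !![pEval a z, pEval b z; -pTilde b z, pTilde a z]) i j))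
    (a' b' : Fin (N + 1) → ℂ)
    (hunit' : ∀ z : ℂ, z ≠ 0 →
      pEval a' z * pTilde a' z + pEval b' z * pTilde b' z = 1)
    (ha'1 : pEval a' 1 = 1) (hb'1 : pEval b' 1 = 0)
    (hpoly' : ∀ i j : Fin 2, IsPolyFun (fun z =>
      ((!![(1 : ℂ), 0; nEval g z, 1] : Matrix (Fin 2) (Fin 2) ℂ) *
        !![pEval a' z, pEval b' z; -pTilde b' z, pTilde a' z]) i j)) :
    a' = a ∧ b' = b := by
  obtain ⟨Q0, hQ0⟩ := hpoly 1 0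
  obtain ⟨R0, hR0⟩ := hpoly 1 1
  obtain ⟨Q1, hQ1⟩ := hpoly' 1 0
  obtain ⟨R1, hR1⟩ := hpoly' 1 1
  have hQ : ∀ z : ℂ, z ≠ 0 → nEval g z * pEval a z - pTilde b z = Q0.eval z := by
    intro z hz
    have := hQ0 z hz
    simp [Matrix.mul_apply, Fin.sum_univ_two] at this
    linear_combination this
  have hR : ∀ z : ℂ, z ≠ 0 → nEval g z * pEval b z + pTilde a z = R0.eval z := by
    intro z hz
    have := hR0 z hz
    simp [Matrix.mul_apply, Fin.sum_univ_two] at this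
    linear_combination this
  have hQ' : ∀ z : ℂ, z ≠ 0 → nEval g z * pEval a' z - pTilde b' z = Q1.eval z := by
    intro z hz
    have := hQ1 z hz
    simp [Matrix.mul_apply, Fin.sum_univ_two] at this
    linear_combination this
  have hR' : ∀ z : ℂ, z ≠ 0 → nEval g z * pEval b' z + pTilde a' z = R1.eval z := by
    intro z hz
    have := hR1 z hz
    simp [Matrix.mul_apply, Fin.sum_univ_two] at this
    linear_combination this
  set PS : Polynomial ℂ := polyOf a' * R0 - polyOf b' * Q0 + polyOf a * R1 - polyOf b * Q1
    with hPSdef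
  have hS : ∀ z : ℂ, z ≠ 0 →
      pEval a' z * pTilde a z + pEval b' z * pTilde b z +
        (pEval a z * pTilde a' z + pEval b z * pTilde b' z) = PS.eval z := by
    intro z hz
    simp only [hPSdef, Polynomial.eval_add, Polynomial.eval_sub, Polynomial.eval_mul,
      polyOf_eval]
    linear_combination pEval a' z * hR z hz - pEval b' z * hQ z hz +
      pEval a z * hR' z hz - pEval b z * hQ' z hz
  have hsym : ∀ z : ℂ, z ≠ 0 → PS.eval z = (PS.map (starRingEnd ℂ)).eval z⁻¹ := by
    intro z hz
    have hw : ((starRingEnd ℂ) z)⁻¹ ≠ 0 := by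
      simp only [ne_eq, inv_eq_zero, map_eq_zero]
      exact hz
    have h1 := hS _ hw
    have h2 := congrArg (starRingEnd ℂ) h1
    simp only [map_add, _root_.map_mul, conj_pEval, conj_pTilde] at h2
    have h3 : (starRingEnd ℂ) (PS.eval ((starRingEnd ℂ z)⁻¹)) =
        (PS.map (starRingEnd ℂ)).eval z⁻¹ := by
      rw [← conj_poly_eval]
      congr 1
      rw [map_inv₀, Complex.conj_conj]
    rw [← h3, ← h2, ← hS z hz]
    ring
  obtain ⟨c, hc⟩ := Polynomial.natDegree_eq_zero.mp (aux_const PS hsym)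
  have hPS1 : PS.eval 1 = 2 := by
    rw [← hS 1 one_ne_zero, pTilde_one a, pTilde_one b, pTilde_one a', pTilde_one b',
      ha1, hb1, ha'1, hb'1]
    simp
    norm_num
  have hc2 : c = 2 := by rw [← hc] at hPS1; simpa using hPS1
  have hS2 : ∀ z : ℂ, z ≠ 0 →
      pEval a' z * pTilde a z + pEval b' z * pTilde b z +
        (pEval a z * pTilde a' z + pEval b z * pTilde b' z) = 2 := by
    intro z hz
    rw [hS z hz, ← hc, hc2]
    simp
  have hdet : ∀ z : ℂ, z ≠ 0 →
      (pEval a' z * pTilde a z + pEval b' z * pTilde b z) *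
        (pEval a z * pTilde a' z + pEval b z * pTilde b' z) +
      (pEval b' z * pEval a z - pEval a' z * pEval b z) *
        (pTilde b' z * pTilde a z - pTilde a' z * pTilde b z) = 1 := by
    intro z hz
    linear_combination (pEval a' z * pTilde a' z + pEval b' z * pTilde b' z) * hunit z hz +
      hunit' z hz
  have hcirc : ∀ z : ℂ, ‖z‖ = 1 →
      pEval b' z * pEval a z - pEval a' z * pEval b z = 0 ∧
      pEval a' z * pTilde a z + pEval b' z * pTilde b z - 1 = 0 := by
    intro z hz
    have hz0 : z ≠ 0 := by intro h; rw [h] at hz; simp at hz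
    have hzc : (starRingEnd ℂ) z * z = 1 := by
      rw [mul_comm, Complex.mul_conj, Complex.normSq_eq_norm_sq, hz]
      norm_num
    have hwz : ((starRingEnd ℂ) z)⁻¹ = z := inv_eq_of_mul_eq_one_right hzc
    have hconjA : ∀ c : Fin (N + 1) → ℂ, (starRingEnd ℂ) (pEval c z) = pTilde c z := by
      intro c
      have := conj_pEval c z
      rwa [hwz] at this
    have hconjT : ∀ c : Fin (N + 1) → ℂ, (starRingEnd ℂ) (pTilde c z) = pEval c z := by
      intro c
      have := conj_pTilde c z
      rwa [hwz] at this
    set f := pEval b' z * pEval a z - pEval a' z * pEval b z with hfdef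
    set u := pEval a' z * pTilde a z + pEval b' z * pTilde b z - 1 with hudef
    have hconjf : (starRingEnd ℂ) f = pTilde b' z * pTilde a z - pTilde a' z * pTilde b z := by
      rw [hfdef, map_sub, _root_.map_mul, _root_.map_mul, hconjA, hconjA, hconjA, hconjA]
    have hconju : (starRingEnd ℂ) u = -u := by
      rw [hudef, map_sub, map_add, _root_.map_mul, _root_.map_mul, hconjA, hconjA,
        hconjT, hconjT, _root_.map_one]
      linear_combination hS2 z hz0
    have hffu : f * (starRingEnd ℂ) f + u * (starRingEnd ℂ) u = 0 := by
      rw [hconjf, hconju]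
      linear_combination hdet z hz0 -
        (pEval a' z * pTilde a z + pEval b' z * pTilde b z) * hS2 z hz0
    have hre : (Complex.normSq f : ℂ) + (Complex.normSq u : ℂ) = 0 := by
      rw [← Complex.mul_conj, ← Complex.mul_conj]
      exact hffu
    have hre' : Complex.normSq f + Complex.normSq u = 0 := by exact_mod_cast hre
    have hnf : Complex.normSq f = 0 := by
      nlinarith [Complex.normSq_nonneg f, Complex.normSq_nonneg u]
    have hnu : Complex.normSq u = 0 := by
      nlinarith [Complex.normSq_nonneg f, Complex.normSq_nonneg u]
    exact ⟨Complex.normSq_eq_zero.mp hnf, Complex.normSq_eq_zero.mp hnu⟩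
  have hPF0 : polyOf b' * polyOf a - polyOf a' * polyOf b = 0 := by
    apply Polynomial.eq_of_infinite_eval_eq
    apply Set.Infinite.mono (s := {z : ℂ | ‖z‖ = 1}) _ circle_infinite
    intro z hz
    show (polyOf b' * polyOf a - polyOf a' * polyOf b).eval z = (0 : Polynomial ℂ).eval z
    rw [Polynomial.eval_zero, Polynomial.eval_sub, Polynomial.eval_mul, Polynomial.eval_mul,
      polyOf_eval, polyOf_eval, polyOf_eval, polyOf_eval]
    exact (hcirc z hz).1
  have hfall : ∀ z : ℂ, pEval b' z * pEval a z - pEval a' z * pEval b z = 0 := by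
    intro z
    have := congrArg (Polynomial.eval z) hPF0
    rwa [Polynomial.eval_zero, Polynomial.eval_sub, Polynomial.eval_mul, Polynomial.eval_mul,
      polyOf_eval, polyOf_eval, polyOf_eval, polyOf_eval] at this
  set PD : Polynomial ℂ := polyOf a' * R0 - polyOf b' * Q0 - 1 with hPDdef
  have hPD : ∀ z : ℂ, z ≠ 0 →
      pEval a' z * pTilde a z + pEval b' z * pTilde b z - 1 -
        nEval g z * (pEval b' z * pEval a z - pEval a' z * pEval b z) = PD.eval z := by
    intro z hz
    simp only [hPDdef, Polynomial.eval_sub, Polynomial.eval_mul, Polynomial.eval_one,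
      polyOf_eval]
    linear_combination pEval a' z * hR z hz - pEval b' z * hQ z hz
  have hPD0 : PD = 0 := by
    apply Polynomial.eq_of_infinite_eval_eq
    apply Set.Infinite.mono (s := {z : ℂ | ‖z‖ = 1}) _ circle_infinite
    intro z hz
    have hz0 : z ≠ 0 := by intro h; rw [h] at hz; simp at hz
    show PD.eval z = (0 : Polynomial ℂ).eval z
    rw [Polynomial.eval_zero, ← hPD z hz0, (hcirc z hz).1, (hcirc z hz).2]
    ring
  have he1 : ∀ z : ℂ, z ≠ 0 →
      pEval a' z * pTilde a z + pEval b' z * pTilde b z = 1 := by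
    intro z hz
    have h1 := hPD z hz
    rw [hPD0, Polynomial.eval_zero, hfall z] at h1
    linear_combination h1
  have hA : ∀ z : ℂ, z ≠ 0 → pEval a' z = pEval a z := by
    intro z hz
    linear_combination (-(pEval a' z)) * hunit z hz + pEval a z * he1 z hz -
      pTilde b z * hfall z
  have hB : ∀ z : ℂ, z ≠ 0 → pEval b' z = pEval b z := by
    intro z hz
    linear_combination (-(pEval b' z)) * hunit z hz + pEval b z * he1 z hz +
      pTilde a z * hfall z
  have hinf : ({(0:ℂ)}ᶜ : Set ℂ).Infinite := Set.Finite.infinite_compl (Set.finite_singleton 0)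
  have hpa : polyOf a' = polyOf a := by
    apply Polynomial.eq_of_infinite_eval_eq
    apply Set.Infinite.mono _ hinf
    intro z hz
    show (polyOf a').eval z = (polyOf a).eval z
    rw [polyOf_eval, polyOf_eval]
    exact hA z hz
  have hpb : polyOf b' = polyOf b := by
    apply Polynomial.eq_of_infinite_eval_eq
    apply Set.Infinite.mono _ hinf
    intro z hz
    show (polyOf b').eval z = (polyOf b).eval z
    rw [polyOf_eval, polyOf_eval]
    exact hB z hz
  constructor
  · funext k
    rw [← polyOf_coeff a' k, ← polyOf_coeff a k, hpa]
  · funext k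
    rw [← polyOf_coeff b' k, ← polyOf_coeff b k, hpb]
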